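/- Two Clifford systems {Pᵢ}, {Qᵢ} ∈ C(2m,n) are geometrically equivalent if and only if the quadratic harmonic morphisms F({Pᵢ}) and F({Qᵢ}) are bi-equivalent. -/
import Mathlib


open Matrix BigOperators

/-- Partial derivative in the `i`-th coordinate direction. -/
noncomputable def pderiv {m : ℕ} (i : Fin m) (f : (Fin m → ℝ) → ℝ) : (Fin m → ℝ) → ℝ :=
  fun x => fderiv ℝ f x (Pi.single i 1)

/-- A map `ℝ^m → ℝ^n` is a harmonic morphism iff each component is harmonic and
the map is horizontally weakly conformal. -/
def IsHarmonicMorphism {m n : ℕ} (φ : (Fin m → ℝ) → (Fin n → ℝ)) : Prop :=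
  (∀ (α : Fin n) (x : Fin m → ℝ), ∑ i : Fin m, pderiv i (pderiv i fun y => φ y α) x = 0) ∧
  ∃ lam : (Fin m → ℝ) → ℝ, ∀ (x : Fin m → ℝ) (α β : Fin n),
      ∑ i : Fin m, pderiv i (fun y => φ y α) x * pderiv i (fun y => φ y β) x
        = lam x ^ 2 * (if α = β then 1 else 0)

/-- `A` is the family of symmetric component matrices of the quadratic map `φ`;
the components are genuine (nonzero) quadratic forms. -/
def Represents {m n : ℕ} (A : Fin n → Matrix (Fin m) (Fin m) ℝ)
    (φ : (Fin m → ℝ) → (Fin n → ℝ)) : Prop :=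
  (∀ α, (A α).IsSymm) ∧ (∀ α, A α ≠ 0) ∧ ∀ x α, φ x α = x ⬝ᵥ (A α).mulVec x

/-- A quadratic harmonic morphism. -/
def IsQuadraticHM {m n : ℕ} (φ : (Fin m → ℝ) → (Fin n → ℝ)) : Prop :=
  (∃ A, Represents A φ) ∧ IsHarmonicMorphism φ

/-- `μ` is an eigenvalue of `A`. -/
def HasEigen {m : ℕ} (A : Matrix (Fin m) (Fin m) ℝ) (μ : ℝ) : Prop :=
  ∃ v : Fin m → ℝ, v ≠ 0 ∧ A.mulVec v = μ • v

/-- `φ` is Q-nonsingular: the common rank of the component matrices equals the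
domain dimension. -/
def QNonsingular {m n : ℕ} (φ : (Fin m → ℝ) → (Fin n → ℝ)) : Prop :=
  ∃ A, Represents A φ ∧ ∀ α, (A α).rank = m

/-- `φ` is umbilical: all positive eigenvalues of the component matrices are equal. -/
def Umbilical {m n : ℕ} (φ : (Fin m → ℝ) → (Fin n → ℝ)) : Prop :=
  ∃ A, Represents A φ ∧ ∀ (α : Fin n) (μ ν : ℝ), 0 < μ → 0 < ν →
    HasEigen (A α) μ → HasEigen (A α) ν → μ = ν

/-- `φ ∈ H₂¹(m,n)`: umbilical quadratic harmonic morphism with positive eigenvalue 1. -/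
def MemH21 {m n : ℕ} (φ : (Fin m → ℝ) → (Fin n → ℝ)) : Prop :=
  IsQuadraticHM φ ∧ ∃ A, Represents A φ ∧
    ∀ α : Fin n, HasEigen (A α) 1 ∧ ∀ μ : ℝ, 0 < μ → HasEigen (A α) μ → μ = 1

/-- `G` is an orthogonal matrix. -/
def IsOrthoMat {m : ℕ} (G : Matrix (Fin m) (Fin m) ℝ) : Prop := Gᵀ * G = 1

/-- Domain-equivalence: `φ = ψ ∘ G` for an orthogonal `G`. -/
def DomainEquiv {m n : ℕ} (φ ψ : (Fin m → ℝ) → (Fin n → ℝ)) : Prop :=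
  ∃ G : Matrix (Fin m) (Fin m) ℝ, IsOrthoMat G ∧ ∀ x, φ x = ψ (G.mulVec x)

/-- Bi-equivalence: `φ = H⁻¹ ∘ ψ ∘ G` for orthogonal `G`, `H`. -/
def BiEquiv {m n : ℕ} (φ ψ : (Fin m → ℝ) → (Fin n → ℝ)) : Prop :=
  ∃ (G : Matrix (Fin m) (Fin m) ℝ) (H : Matrix (Fin n) (Fin n) ℝ),
    IsOrthoMat G ∧ IsOrthoMat H ∧ ∀ x, φ x = H⁻¹.mulVec (ψ (G.mulVec x))

/-- A Clifford system: symmetric endomorphisms with `PᵢPⱼ + PⱼPᵢ = 2δᵢⱼ Id`. -/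
def IsCliffordSystem {N n : ℕ} (P : Fin n → Matrix (Fin N) (Fin N) ℝ) : Prop :=
  (∀ i, (P i).IsSymm) ∧
  ∀ i j, P i * P j + P j * P i =
    if i = j then (2 : ℝ) • (1 : Matrix (Fin N) (Fin N) ℝ) else 0

/-- The map `F` sending a Clifford system to the quadratic map
`X ↦ (⟨P₁X,X⟩,…,⟨PₙX,X⟩)`. -/
def cliffordMap {N n : ℕ} (P : Fin n → Matrix (Fin N) (Fin N) ℝ) :
    (Fin N → ℝ) → Fin n → ℝ := fun X α => X ⬝ᵥ (P α).mulVec X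

/-- Algebraic equivalence of Clifford systems. -/
def CliffordAlgEquiv {N n : ℕ} (P Q : Fin n → Matrix (Fin N) (Fin N) ℝ) : Prop :=
  ∃ A : Matrix (Fin N) (Fin N) ℝ, IsOrthoMat A ∧ ∀ i, Q i = A * P i * Aᵀ

/-- Irreducibility: the space is not a direct sum of two nontrivial invariant subspaces. -/
def CliffordIrreducible {N n : ℕ} (P : Fin n → Matrix (Fin N) (Fin N) ℝ) : Prop :=
  ¬∃ U V : Submodule ℝ (Fin N → ℝ), U ≠ ⊥ ∧ V ≠ ⊥ ∧ IsCompl U V ∧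
    (∀ i, ∀ x ∈ U, (P i).mulVec x ∈ U) ∧ ∀ i, ∀ x ∈ V, (P i).mulVec x ∈ V

/-- An O-system: orthogonal endomorphisms with `τᵢᵗτⱼ + τⱼᵗτᵢ = 2δᵢⱼ Id`. -/
def IsOSystem {m n : ℕ} (τ : Fin n → Matrix (Fin m) (Fin m) ℝ) : Prop :=
  (∀ i, (τ i)ᵀ * τ i = 1) ∧
  ∀ i j, (τ i)ᵀ * τ j + (τ j)ᵀ * τ i =
    if i = j then (2 : ℝ) • (1 : Matrix (Fin m) (Fin m) ℝ) else 0

/-- Algebraic equivalence of O-systems. -/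
def OAlgEquiv {m n : ℕ} (τ ρ : Fin n → Matrix (Fin m) (Fin m) ℝ) : Prop :=
  ∃ θ : Matrix (Fin m) (Fin m) ℝ, IsOrthoMat θ ∧ ∀ i, ρ i = θ * τ i * θᵀ

/-- Block-diagonal direct sum of square matrices. -/
def bdiag {m l : ℕ} (A : Matrix (Fin m) (Fin m) ℝ) (B : Matrix (Fin l) (Fin l) ℝ) :
    Matrix (Fin (m + l)) (Fin (m + l)) ℝ :=
  (Matrix.fromBlocks A 0 0 B).submatrix finSumFinEquiv.symm finSumFinEquiv.symm

/-- The block matrix `[[I,0],[0,-I]]`. -/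
def assocP0 (m : ℕ) : Matrix (Fin (m + m)) (Fin (m + m)) ℝ :=
  (Matrix.fromBlocks 1 0 0 (-1)).submatrix finSumFinEquiv.symm finSumFinEquiv.symm

/-- The block matrix `[[0,τ],[τᵗ,0]]`. -/
def assocPi {m : ℕ} (τ : Matrix (Fin m) (Fin m) ℝ) : Matrix (Fin (m + m)) (Fin (m + m)) ℝ :=
  (Matrix.fromBlocks 0 τ τᵀ 0).submatrix finSumFinEquiv.symm finSumFinEquiv.symm

/-- The Clifford system `(P₀,P₁,…,Pₙ)` associated to an O-system `(τ₁,…,τₙ)`. -/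
def assocClifford {m n : ℕ} (τ : Fin n → Matrix (Fin m) (Fin m) ℝ) :
    Fin (n + 1) → Matrix (Fin (m + m)) (Fin (m + m)) ℝ :=
  Fin.cons (assocP0 m) fun j => assocPi (τ j)

/-- Direct sum of two maps: `(φ ⊕ ψ)(x,y) = φ(x) + ψ(y)`. -/
def dsum {m l n : ℕ} (φ : (Fin m → ℝ) → Fin n → ℝ) (ψ : (Fin l → ℝ) → Fin n → ℝ) :
    (Fin (m + l) → ℝ) → Fin n → ℝ :=
  fun x => φ (fun i => x (Fin.castAdd l i)) + ψ fun j => x (Fin.natAdd m j)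

/-- Transport a map along an equality of domain dimensions. -/
def reMap {a b n : ℕ} (h : a = b) (ψ : (Fin b → ℝ) → Fin n → ℝ) :
    (Fin a → ℝ) → Fin n → ℝ := fun x => ψ fun i => x (finCongr h.symm i)

/-- A separable quadratic harmonic morphism. -/
def Separable {M n : ℕ} (φ : (Fin M → ℝ) → Fin n → ℝ) : Prop :=
  ∃ (m l : ℕ) (h : M = m + l), 0 < m ∧ 0 < l ∧
    ∃ (φ₁ : (Fin m → ℝ) → Fin n → ℝ) (φ₂ : (Fin l → ℝ) → Fin n → ℝ),
      IsQuadraticHM φ₁ ∧ IsQuadraticHM φ₂ ∧ φ = reMap h (dsum φ₁ φ₂)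

/-- The `k`-fold direct sum `ψ₁ ⊕ … ⊕ ψₖ` of maps with the same domain dimension. -/
def bigDSum {k M n : ℕ} (ψ : Fin k → (Fin M → ℝ) → Fin n → ℝ) :
    (Fin (k * M) → ℝ) → Fin n → ℝ :=
  fun x => ∑ j : Fin k, ψ j fun i => x (finProdFinEquiv (j, i))

/-- Domain-minimality: no quadratic harmonic morphism into `ℝ^n` exists from a
smaller-dimensional domain. -/
def DomainMinimal {M n : ℕ} (φ : (Fin M → ℝ) → Fin n → ℝ) : Prop :=
  IsQuadraticHM φ ∧ ∀ M' : ℕ, M' < M → ¬∃ ψ : (Fin M' → ℝ) → Fin n → ℝ, IsQuadraticHM ψ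

/-- `m(n)`: dimensions of irreducible Clifford systems;
`m(1)=1, m(2)=2, m(3)=m(4)=4, m(5)=…=m(8)=8, m(n+8)=16m(n)`. -/
def mfun : ℕ → ℕ
  | 0 => 1
  | 1 => 1
  | 2 => 2
  | 3 => 4
  | 4 => 4
  | 5 => 8
  | 6 => 8
  | 7 => 8
  | 8 => 8
  | n + 9 => 16 * mfun (n + 1)

/-- The Hurwitz–Radon number: for `m = (2r+1)·2^(c+4d)` with `0 ≤ c ≤ 3`,
`σ(m) = 2^c + 8d`. -/
def hrSigma (m : ℕ) : ℕ := 2 ^ (padicValNat 2 m % 4) + 8 * (padicValNat 2 m / 4)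

/-- Geometric equivalence of Clifford systems: after an orthogonal change of the
span, the systems are algebraically equivalent. -/
def CliffordGeomEquiv {N n : ℕ} (P Q : Fin n → Matrix (Fin N) (Fin N) ℝ) : Prop :=
  ∃ a : Matrix (Fin n) (Fin n) ℝ, IsOrthoMat a ∧
    CliffordAlgEquiv (fun i => ∑ j, a i j • P j) Q

private lemma ortho_mul_t {k : ℕ} {H : Matrix (Fin k) (Fin k) ℝ} (h : IsOrthoMat H) :
    H * Hᵀ = 1 := mul_eq_one_comm.mp h

private lemma ortho_inv {k : ℕ} {H : Matrix (Fin k) (Fin k) ℝ} (h : IsOrthoMat H) :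
    H⁻¹ = Hᵀ := Matrix.inv_eq_left_inv h

private lemma conj_quadform {N : ℕ} (G M : Matrix (Fin N) (Fin N) ℝ) (x : Fin N → ℝ) :
    x ⬝ᵥ (Gᵀ * M * G).mulVec x = (G.mulVec x) ⬝ᵥ M.mulVec (G.mulVec x) := by
  rw [← Matrix.mulVec_mulVec, ← Matrix.mulVec_mulVec, Matrix.dotProduct_mulVec,
    Matrix.vecMul_transpose]

private lemma quadform_sum {N k : ℕ} (c : Fin k → ℝ) (M : Fin k → Matrix (Fin N) (Fin N) ℝ)
    (x : Fin N → ℝ) :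
    x ⬝ᵥ (∑ β, c β • M β).mulVec x = ∑ β, c β * (x ⬝ᵥ (M β).mulVec x) := by
  have hsum : (∑ β, c β • M β).mulVec x = ∑ β, (c β • M β).mulVec x := by
    ext l
    simp only [Matrix.mulVec, dotProduct, Matrix.sum_apply, Finset.sum_apply, Finset.sum_mul]
    exact Finset.sum_comm
  rw [hsum]
  have hdp : x ⬝ᵥ ∑ β, (c β • M β) *ᵥ x = ∑ β, x ⬝ᵥ (c β • M β) *ᵥ x := by
    simp only [dotProduct, Finset.sum_apply, Finset.mul_sum]
    exact Finset.sum_comm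
  rw [hdp]
  refine Finset.sum_congr rfl fun β _ => ?_
  rw [Matrix.smul_mulVec, dotProduct_smul, smul_eq_mul]

private lemma symm_quadform_eq {N : ℕ} {M M' : Matrix (Fin N) (Fin N) ℝ}
    (hM : M.IsSymm) (hM' : M'.IsSymm)
    (h : ∀ x : Fin N → ℝ, x ⬝ᵥ M.mulVec x = x ⬝ᵥ M'.mulVec x) : M = M' := by
  have hb : ∀ x y : Fin N → ℝ, x ⬝ᵥ M.mulVec y = x ⬝ᵥ M'.mulVec y := by
    intro x y
    have e1 : ∀ B : Matrix (Fin N) (Fin N) ℝ, B.IsSymm →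
        (x + y) ⬝ᵥ B.mulVec (x + y)
          = x ⬝ᵥ B.mulVec x + y ⬝ᵥ B.mulVec y + 2 * (x ⬝ᵥ B.mulVec y) := by
      intro B hB
      have hs : y ⬝ᵥ B.mulVec x = x ⬝ᵥ B.mulVec y := by
        rw [Matrix.dotProduct_mulVec, ← Matrix.mulVec_transpose, hB, dotProduct_comm]
      simp only [Matrix.mulVec_add, dotProduct_add, add_dotProduct, hs]
      ring
    have h1 := h (x + y)
    rw [e1 M hM, e1 M' hM', h x, h y] at h1
    linarith
  ext i j
  have := hb (Pi.single i 1) (Pi.single j 1)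
  simpa [dotProduct, Matrix.mulVec, Pi.single_apply] using this

/-- Two Clifford systems `{Pᵢ}, {Qᵢ} ∈ C(2m,n)` are geometrically
equivalent iff the quadratic harmonic morphisms `F({Pᵢ})` and `F({Qᵢ})` are
bi-equivalent. -/
theorem clifford_geomEquiv_iff_biEquiv {m n : ℕ}
    (P Q : Fin n → Matrix (Fin (m + m)) (Fin (m + m)) ℝ)
    (hP : IsCliffordSystem P) (hQ : IsCliffordSystem Q) :
    CliffordGeomEquiv P Q ↔ BiEquiv (cliffordMap P) (cliffordMap Q) := by
  constructor
  · rintro ⟨a, ha, A, hA, hQ'⟩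
    refine ⟨A, a, hA, ha, fun x => ?_⟩
    rw [ortho_inv ha]
    have key : cliffordMap Q (A.mulVec x) = a.mulVec (cliffordMap P x) := by
      funext i
      show (A.mulVec x) ⬝ᵥ (Q i).mulVec (A.mulVec x) = _
      rw [hQ' i, ← conj_quadform]
      have hS : Aᵀ * (A * (∑ j, a i j • P j) * Aᵀ) * A = ∑ j, a i j • P j := by
        calc Aᵀ * (A * (∑ j, a i j • P j) * Aᵀ) * A
            = (Aᵀ * A) * (∑ j, a i j • P j) * (Aᵀ * A) := by
              simp only [Matrix.mul_assoc]
          _ = ∑ j, a i j • P j := by rw [hA, Matrix.one_mul, Matrix.mul_one]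
      rw [hS, quadform_sum]
      simp [Matrix.mulVec, dotProduct, cliffordMap]
    rw [key, Matrix.mulVec_mulVec, ha, Matrix.one_mulVec]
  · rintro ⟨G, H, hG, hH, hbe⟩
    have hP_eq : ∀ α, P α = ∑ β, H β α • (Gᵀ * Q β * G) := by
      intro α
      have hsymm : (∑ β, H β α • (Gᵀ * Q β * G)).IsSymm := by
        unfold Matrix.IsSymm
        rw [Matrix.transpose_sum]
        refine Finset.sum_congr rfl fun β _ => ?_
        rw [Matrix.transpose_smul, Matrix.transpose_mul, Matrix.transpose_mul,
          Matrix.transpose_transpose, hQ.1 β, Matrix.mul_assoc]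
      refine symm_quadform_eq (hP.1 α) hsymm fun x => ?_
      have hx := congrFun (hbe x) α
      rw [ortho_inv hH] at hx
      rw [quadform_sum]
      calc x ⬝ᵥ (P α).mulVec x = cliffordMap P x α := rfl
        _ = Hᵀ.mulVec (cliffordMap Q (G.mulVec x)) α := hx
        _ = ∑ β, H β α * ((G.mulVec x) ⬝ᵥ (Q β).mulVec (G.mulVec x)) := by
            simp [Matrix.mulVec, dotProduct, cliffordMap, Matrix.transpose_apply]
        _ = ∑ β, H β α * (x ⬝ᵥ (Gᵀ * Q β * G).mulVec x) := by
            simp only [conj_quadform]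
    refine ⟨H, hH, G, hG, fun i => ?_⟩
    show Q i = G * (∑ j, H i j • P j) * Gᵀ
    have hs : (∑ j, H i j • P j) = Gᵀ * Q i * G := by
      calc ∑ j, H i j • P j
          = ∑ j, ∑ β, (H i j * H β j) • (Gᵀ * Q β * G) := by
            refine Finset.sum_congr rfl fun j _ => ?_
            rw [hP_eq j, Finset.smul_sum]
            simp [smul_smul]
        _ = ∑ β, (∑ j, H i j * H β j) • (Gᵀ * Q β * G) := by
            rw [Finset.sum_comm]
            simp [Finset.sum_smul]
        _ = ∑ β, (H * Hᵀ) i β • (Gᵀ * Q β * G) := by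
            simp [Matrix.mul_apply, Matrix.transpose_apply]
        _ = ∑ β, ((1 : Matrix (Fin n) (Fin n) ℝ) i β) • (Gᵀ * Q β * G) := by
            rw [ortho_mul_t hH]
        _ = Gᵀ * Q i * G := by
            simp [Matrix.one_apply, ite_smul]
    rw [hs]
    calc Q i = 1 * Q i * 1 := by rw [Matrix.one_mul, Matrix.mul_one]
      _ = (G * Gᵀ) * Q i * (G * Gᵀ) := by rw [ortho_mul_t hG]
      _ = G * (Gᵀ * Q i * G) * Gᵀ := by simp only [Matrix.mul_assoc]
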